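/- Let L : H → G be bounded linear with 0 < ‖L‖ ≤ 1 and let B be a strictly positive bounded operator on G. For γ > 0 set Ψ = Id_G − L ∘ L* and define the resolvent cocomposition L ⊡_γ B = L* ∘ (B⁻¹ + γΨ)⁻¹ ∘ L. Then L ⊡_γ B is a positive bounded operator on H. -/

import Mathlib

open ContinuousLinearMap MeasureTheory

noncomputable section

variable {E : Type*} [NormedAddCommGroup E] [InnerProductSpace ℝ E] [CompleteSpace E]
variable {H G : Type*} [NormedAddCommGroup H] [InnerProductSpace ℝ H] [CompleteSpace H]
  [NormedAddCommGroup G] [InnerProductSpace ℝ G] [CompleteSpace G]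

/-- Löwner partial order: `A ≼ B` iff `B - A` is a positive operator. -/
def Loewner (A B : E →L[ℝ] E) : Prop := (B - A).IsPositive

/-- Strictly positive operators: `α • Id ≼ A` for some `α > 0`. -/
def StrictlyPos (A : E →L[ℝ] E) : Prop :=
  IsSelfAdjoint A ∧ ∃ α : ℝ, 0 < α ∧ Loewner (α • (1 : E →L[ℝ] E)) A

/-- Bounded below linear operator. -/
def BoundedBelow (L : H →L[ℝ] G) : Prop := ∃ β : ℝ, 0 < β ∧ ∀ x : H, β * ‖x‖ ≤ ‖L x‖

/-- Resolvent cocomposition `L ⊡_γ B = L* ∘ (B⁻¹ + γ(Id − L L*))⁻¹ ∘ L`. -/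
def rcc (L : H →L[ℝ] G) (γ : ℝ) (B : G →L[ℝ] G) : H →L[ℝ] H :=
  (adjoint L) ∘L (Ring.inverse (Ring.inverse B + γ • ((1 : G →L[ℝ] G) - L ∘L adjoint L))) ∘L L

/-- Resolvent composition `L ⊙_γ B = (L ⊡_{1/γ} B⁻¹)⁻¹`. -/
def rc (L : H →L[ℝ] G) (γ : ℝ) (B : G →L[ℝ] G) : H →L[ℝ] H :=
  Ring.inverse (rcc L (1/γ) (Ring.inverse B))

/-- Parallel composition `L* ▸ B = (L* ∘ B⁻¹ ∘ L)⁻¹`. -/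
def parallelComp (L : H →L[ℝ] G) (B : G →L[ℝ] G) : H →L[ℝ] H :=
  Ring.inverse ((adjoint L) ∘L (Ring.inverse B) ∘L L)

/-- `g(A,B) = inf {λ > 0 : A ≼ λ B}`. -/
def gThomp (A B : E →L[ℝ] E) : ℝ := sInf {l : ℝ | 0 < l ∧ Loewner A (l • B)}

/-- Thompson metric. -/
def dThomp (A B : E →L[ℝ] E) : ℝ := Real.log (max (gThomp A B) (gThomp B A))

/-- The (unique) positive square root of a positive operator. -/
def opSqrt (A : E →L[ℝ] E) : E →L[ℝ] E :=
  letI := Classical.propDecidable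
  if h : ∃ S : E →L[ℝ] E, S.IsPositive ∧ S * S = A then h.choose else 0

/-- Real power `A^t` of a strictly positive operator, `t ∈ (0,1)`, via the
Balakrishnan integral formula `A^t = (sin (π t)/π) ∫₀^∞ s^{t-1} A (A + s)⁻¹ ds`. -/
def opRpow (A : E →L[ℝ] E) (t : ℝ) : E →L[ℝ] E :=
  (Real.sin (Real.pi * t) / Real.pi) •
    ∫ s in Set.Ioi (0 : ℝ), s ^ (t - 1) • (A * Ring.inverse (A + s • (1 : E →L[ℝ] E)))

/-- Geometric mean `A # B = A^{1/2} (A^{-1/2} B A^{-1/2})^{1/2} A^{1/2}`. -/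
def geomMean (A B : E →L[ℝ] E) : E →L[ℝ] E :=
  opSqrt A * opSqrt (Ring.inverse (opSqrt A) * B * Ring.inverse (opSqrt A)) * opSqrt A

/-- `t`-weighted geometric mean `A #_t B = A^{1/2} (A^{-1/2} B A^{-1/2})^t A^{1/2}`. -/
def wGeomMean (t : ℝ) (A B : E →L[ℝ] E) : E →L[ℝ] E :=
  opSqrt A * opRpow (Ring.inverse (opSqrt A) * B * Ring.inverse (opSqrt A)) t * opSqrt A

open InnerProductSpace in
lemma coercive_aux {T : G →L[ℝ] G} (hT : IsSelfAdjoint T) {c : ℝ} (hc : 0 < c)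
    (hco : ∀ x : G, c * (‖x‖ * ‖x‖) ≤ ⟪T x, x⟫_ℝ) :
    IsUnit T ∧ IsSelfAdjoint (Ring.inverse T) ∧
      ∃ d : ℝ, 0 < d ∧ ∀ x : G, d * (‖x‖ * ‖x‖) ≤ ⟪Ring.inverse T x, x⟫_ℝ := by
  -- bounded below
  have hbb : ∀ x : G, c * ‖x‖ ≤ ‖T x‖ := by
    intro x
    rcases eq_or_lt_of_le (norm_nonneg x) with h | h
    · simp [← h]
    · have h1 : c * ‖x‖ * ‖x‖ ≤ ‖T x‖ * ‖x‖ :=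
        le_trans (by simpa [mul_assoc] using hco x) (real_inner_le_norm (T x) x)
      exact le_of_mul_le_mul_right h1 h
  have hanti : AntilipschitzWith (c⁻¹).toNNReal T := by
    refine T.antilipschitz_of_bound fun x => ?_
    rw [Real.coe_toNNReal _ (by positivity)]
    rw [inv_mul_eq_div, le_div_iff₀ hc, mul_comm]
    exact hbb x
  have hker : T.ker = ⊥ := LinearMap.ker_eq_bot.mpr hanti.injective
  have hclosed : IsClosed (T.range : Set G) :=
    hanti.isClosed_range T.uniformContinuous
  have hrange : T.range = ⊤ := by
    haveI := hclosed.completeSpace_coe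
    rw [← (T.range).orthogonal_orthogonal, Submodule.eq_top_iff']
    intro v w hw
    obtain rfl : w = 0 := by
      have h0 : ⟪T w, w⟫_ℝ = 0 := hw _ ⟨w, rfl⟩
      have := hco w
      rw [h0] at this
      have : ‖w‖ * ‖w‖ ≤ 0 := by nlinarith
      have : ‖w‖ = 0 := by nlinarith [norm_nonneg w, mul_self_nonneg ‖w‖]
      simpa using this
    exact inner_zero_left _
  set e := ContinuousLinearEquiv.ofBijective T hker hrange with he
  have hUnit : IsUnit T := by
    refine ⟨⟨T, e.symm.toContinuousLinearMap, ?_, ?_⟩, rfl⟩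
    · ext x
      simpa [he] using e.apply_symm_apply x
    · ext x
      simpa [he] using e.symm_apply_apply x
  set S := Ring.inverse T with hS
  have hTS : T * S = 1 := Ring.mul_inverse_cancel T hUnit
  have hST : S * T = 1 := Ring.inverse_mul_cancel T hUnit
  have hTSx : ∀ x, T (S x) = x := fun x => by
    have := congrArg (fun A : G →L[ℝ] G => A x) hTS
    simpa using this
  have hSsa : IsSelfAdjoint S := by
    show star S = S
    rw [hS, ← Ring.inverse_star, hT.star_eq]
  refine ⟨hUnit, hSsa, c / ((‖T‖ + 1) ^ 2), by positivity, fun x => ?_⟩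
  have h1 : ⟪S x, x⟫_ℝ = ⟪T (S x), S x⟫_ℝ := by
    rw [hTSx x]
    exact real_inner_comm _ _
  have h2 : ‖x‖ ≤ (‖T‖ + 1) * ‖S x‖ := by
    calc ‖x‖ = ‖T (S x)‖ := by rw [hTSx x]
    _ ≤ ‖T‖ * ‖S x‖ := T.le_opNorm _
    _ ≤ (‖T‖ + 1) * ‖S x‖ := by nlinarith [norm_nonneg (S x), norm_nonneg T]
  have h3 : c * (‖S x‖ * ‖S x‖) ≤ ⟪S x, x⟫_ℝ := by rw [h1]; exact hco (S x)
  have hTpos : (0:ℝ) < ‖T‖ + 1 := by positivity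
  rw [div_mul_eq_mul_div, div_le_iff₀ (by positivity)]
  calc c * (‖x‖ * ‖x‖) ≤ c * ((‖T‖ + 1) * ‖S x‖ * ((‖T‖ + 1) * ‖S x‖)) := by
        have := mul_le_mul h2 h2 (norm_nonneg x) (by positivity)
        nlinarith
    _ = c * (‖S x‖ * ‖S x‖) * (‖T‖ + 1) ^ 2 := by ring
    _ ≤ ⟪S x, x⟫_ℝ * (‖T‖ + 1) ^ 2 := by nlinarith [h3]

open InnerProductSpace in
set_option maxHeartbeats 1000000 in
theorem rcc_isPositive (L : H →L[ℝ] G) (hL0 : 0 < ‖L‖) (hL1 : ‖L‖ ≤ 1)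
    (B : G →L[ℝ] G) (hB : StrictlyPos B) (γ : ℝ) (hγ : 0 < γ) :
    (rcc L γ B).IsPositive := by
  obtain ⟨hBsa, α, hα, hαB⟩ := hB
  have hαB : (B - α • (1 : G →L[ℝ] G)).IsPositive := hαB
  show ((adjoint L) ∘L (Ring.inverse (Ring.inverse B + γ • ((1 : G →L[ℝ] G) - L ∘L adjoint L))) ∘L L).IsPositive

  have hBco : ∀ x : G, α * (‖x‖ * ‖x‖) ≤ ⟪B x, x⟫_ℝ := by
    intro x
    have h := hαB.2 x
    rw [reApplyInnerSelf_apply] at h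
    simp only [sub_apply, smul_apply, one_apply_eq_self, inner_sub_left, real_inner_smul_left,
      real_inner_self_eq_norm_mul_norm, RCLike.re_to_real] at h
    linarith
  obtain ⟨hBu, hBisa, d, hd, hBico⟩ := coercive_aux hBsa hα hBco
  set Ψ : G →L[ℝ] G := (1 : G →L[ℝ] G) - L ∘L adjoint L with hΨ
  have hΨsa : IsSelfAdjoint Ψ := by
    have h1 : star (L ∘L adjoint L) = L ∘L adjoint L := by
      rw [star_eq_adjoint, adjoint_comp, adjoint_adjoint]
    show star Ψ = Ψ
    rw [hΨ, star_sub, star_one, h1]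
  have hΨpos : ∀ x : G, 0 ≤ ⟪Ψ x, x⟫_ℝ := by
    intro x
    have h1 : ⟪L (adjoint L x), x⟫_ℝ = ‖adjoint L x‖ * ‖adjoint L x‖ := by
      rw [← adjoint_inner_right, real_inner_self_eq_norm_mul_norm]
    have h2 : ‖adjoint L x‖ ≤ ‖x‖ := by
      calc ‖adjoint L x‖ ≤ ‖adjoint L‖ * ‖x‖ := (adjoint L).le_opNorm x
        _ ≤ 1 * ‖x‖ := by
            have hadj : ‖adjoint L‖ = ‖L‖ := LinearIsometryEquiv.norm_map adjoint L
            exact mul_le_mul_of_nonneg_right (hadj ▸ hL1) (norm_nonneg x)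
        _ = ‖x‖ := one_mul _
    simp only [hΨ, sub_apply, comp_apply, one_apply_eq_self, inner_sub_left, h1,
      real_inner_self_eq_norm_mul_norm]
    nlinarith [norm_nonneg x, norm_nonneg (adjoint L x)]
  set M : G →L[ℝ] G := Ring.inverse B + γ • Ψ with hM
  have hMsa : IsSelfAdjoint M := by
    show star M = M
    rw [hM, star_add, star_smul, hBisa.star_eq, hΨsa.star_eq, star_trivial]
  have hMco : ∀ x : G, d * (‖x‖ * ‖x‖) ≤ ⟪M x, x⟫_ℝ := by
    intro x
    have h1 := hBico x
    have h2 := hΨpos x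
    simp only [hM, add_apply, smul_apply, inner_add_left, real_inner_smul_left]
    nlinarith
  obtain ⟨hMu, hMisa, d', hd', hMico⟩ := coercive_aux hMsa hd hMco
  have hpos : (Ring.inverse M).IsPositive := by
    refine isPositive_def'.mpr ⟨hMisa, fun x => ?_⟩
    rw [reApplyInnerSelf_apply]
    have := hMico x
    simp only [RCLike.re_to_real]
    nlinarith [norm_nonneg x]
  exact hpos.adjoint_conj L


end
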